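/- Let f⁺_∞, f⁻_∞ be nonnegative integrable steady states of the space-heterogeneous model with constant stock price, normalized so that ∫∫(f⁺_∞ + f⁻_∞) dm dc = 1 and with decay at infinity in c. If ED[f⁺_∞, f⁻_∞] < 0 and H(−ED) > 0, then f⁺_∞ = 0 and ED = −1; symmetrically, if ED > 0 then f⁻_∞ = 0 and ED = 1. Hence the equilibrium excess demand can only take values in {−1, 0, 1}. -/

import Mathlib

open MeasureTheory

noncomputable def rho : ℝ → ℝ := fun t => max (t * (1 - t)) 0

lemma rho_cont : Continuous rho := (continuous_id.mul (continuous_const.sub continuous_id)).max continuous_const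

lemma rho_nonneg (t : ℝ) : 0 ≤ rho t := le_max_right _ _

lemma rho_le_one (t : ℝ) : rho t ≤ 1 := max_le (by nlinarith [sq_nonneg (t - 1/2)]) one_pos.le

lemma rho_eq_zero {t : ℝ} (h : t ≤ 0 ∨ 1 ≤ t) : rho t = 0 := by
  rcases h with h | h <;> exact max_eq_right (by nlinarith)

lemma rho_pos {t : ℝ} (h0 : 0 < t) (h1 : t < 1) : 0 < rho t :=
  lt_max_of_lt_left (by nlinarith)

noncomputable def sfun : ℝ → ℝ := fun t => ∫ u in (0:ℝ)..t, rho u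

lemma sfun_hasDerivAt (t : ℝ) : HasDerivAt sfun (rho t) t :=
  (rho_cont.integral_hasStrictDerivAt 0 t).hasDerivAt

lemma sfun_differentiable : Differentiable ℝ sfun := fun t => (sfun_hasDerivAt t).differentiableAt

lemma sfun_deriv : deriv sfun = rho := funext fun t => (sfun_hasDerivAt t).deriv

lemma sfun_contDiff : ContDiff ℝ 1 sfun := by
  rw [contDiff_one_iff_deriv]
  exact ⟨sfun_differentiable, sfun_deriv ▸ rho_cont⟩

lemma sfun_monotone : Monotone sfun := by
  apply monotone_of_deriv_nonneg sfun_differentiable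
  rw [sfun_deriv]; exact rho_nonneg

lemma sfun_eq_zero {t : ℝ} (h : t ≤ 0) : sfun t = 0 := by
  have : sfun t = -∫ u in t..(0:ℝ), rho u := intervalIntegral.integral_symm _ _
  rw [this, neg_eq_zero]
  rw [intervalIntegral.integral_congr (g := fun _ => (0:ℝ))]
  · simp
  · intro u hu
    rw [Set.uIcc_of_le h] at hu
    exact rho_eq_zero (Or.inl hu.2)

lemma sfun_eq_of_one_le {t : ℝ} (h : 1 ≤ t) : sfun t = sfun 1 := by
  have key : sfun 1 + ∫ u in (1:ℝ)..t, rho u = sfun t :=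
    intervalIntegral.integral_add_adjacent_intervals
      (rho_cont.intervalIntegrable _ _) (rho_cont.intervalIntegrable _ _)
  have h2 : (∫ u in (1:ℝ)..t, rho u) = 0 := by
    rw [intervalIntegral.integral_congr (g := fun _ => (0:ℝ))]
    · simp
    · intro u hu
      rw [Set.uIcc_of_le h] at hu
      exact rho_eq_zero (Or.inr hu.1)
  linarith

lemma sfun_nonneg (t : ℝ) : 0 ≤ sfun t := by
  rcases le_or_gt t 0 with h | h
  · exact (sfun_eq_zero h).ge
  · rw [← sfun_eq_zero (le_refl (0:ℝ))]; exact sfun_monotone h.le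

lemma sfun_le (t : ℝ) : sfun t ≤ sfun 1 := by
  rcases le_or_gt t 1 with h | h
  · exact sfun_monotone h
  · exact (sfun_eq_of_one_le h.le).le

lemma sfun_pos {t : ℝ} (h : 0 < t) : 0 < sfun t := by
  have hm : min t 1 ≤ t := min_le_left _ _
  have h1 : 0 < min t 1 := lt_min h one_pos
  have : 0 < sfun (min t 1) := by
    apply intervalIntegral.intervalIntegral_pos_of_pos_on (rho_cont.intervalIntegrable _ _)
    · intro x hx
      exact rho_pos hx.1 (lt_of_lt_of_le hx.2 (min_le_right _ _))
    · exact h1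
  exact lt_of_lt_of_le this (sfun_monotone hm)


open Filter

noncomputable def chi (a b t : ℝ) : ℝ := sfun (t - a) - sfun (t - b)

lemma chi_contDiff (a b : ℝ) : ContDiff ℝ 1 (chi a b) :=
  (sfun_contDiff.comp (contDiff_id.sub contDiff_const)).sub
    (sfun_contDiff.comp (contDiff_id.sub contDiff_const))

lemma chi_hasDerivAt (a b t : ℝ) :
    HasDerivAt (chi a b) (rho (t - a) - rho (t - b)) t := by
  have h1 : HasDerivAt (fun t => sfun (t - a)) (rho (t - a)) t := by
    have := (sfun_hasDerivAt (t - a)).comp t ((hasDerivAt_id t).sub_const a)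
    rw [mul_one] at this; exact this
  have h2 : HasDerivAt (fun t => sfun (t - b)) (rho (t - b)) t := by
    have := (sfun_hasDerivAt (t - b)).comp t ((hasDerivAt_id t).sub_const b)
    rw [mul_one] at this; exact this
  exact h1.sub h2

lemma chi_nonneg {a b : ℝ} (hab : a ≤ b) (t : ℝ) : 0 ≤ chi a b t :=
  sub_nonneg.2 (sfun_monotone (by linarith))

lemma chi_le (a b t : ℝ) : chi a b t ≤ sfun 1 := by
  have := sfun_le (t - a); have := sfun_nonneg (t - b); unfold chi; linarith

lemma chi_eq_zero_of_le {a b t : ℝ} (hab : a ≤ b) (h : t ≤ a) : chi a b t = 0 := by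
  unfold chi; rw [sfun_eq_zero (by linarith), sfun_eq_zero (by linarith)]; ring

lemma chi_eq_zero_of_ge {a b t : ℝ} (hab : a ≤ b) (h : b + 1 ≤ t) : chi a b t = 0 := by
  unfold chi; rw [sfun_eq_of_one_le (by linarith), sfun_eq_of_one_le (t := t - b) (by linarith)]; ring

lemma chi_pos {a b t : ℝ} (h1 : a < t) (h2 : t ≤ b) : 0 < chi a b t := by
  have := sfun_pos (sub_pos.2 h1)
  have := sfun_eq_zero (t := t - b) (by linarith)
  unfold chi; linarith

noncomputable def psi (S : ℝ) (m : ℕ) (x : ℝ) : ℝ :=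
  chi (S - m - 1) (S + m) x * (x - S) ^ 2

lemma psi_contDiff (S : ℝ) (m : ℕ) : ContDiff ℝ 1 (psi S m) :=
  (chi_contDiff _ _).mul ((contDiff_id.sub contDiff_const).pow 2)

lemma psi_nonneg (S : ℝ) (m : ℕ) (x : ℝ) : 0 ≤ psi S m x :=
  mul_nonneg (chi_nonneg (by push_cast; linarith [Nat.cast_nonneg (α := ℝ) m]) x) (sq_nonneg _)

lemma psi_self (S : ℝ) (m : ℕ) : psi S m S = 0 := by simp [psi]

lemma psi_eq_zero (S : ℝ) (m : ℕ) {x : ℝ} (h : x ∉ Set.Icc (S - m - 1) (S + m + 1)) :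
    psi S m x = 0 := by
  have hab : S - (m:ℝ) - 1 ≤ S + m := by linarith [Nat.cast_nonneg (α := ℝ) m]
  rw [Set.mem_Icc, not_and_or] at h
  unfold psi
  rcases h with h | h
  · rw [chi_eq_zero_of_le hab (by push_cast; linarith)]; ring
  · rw [chi_eq_zero_of_ge hab (by push_cast; linarith)]; ring

lemma psi_bdd (S : ℝ) (m : ℕ) (x : ℝ) : |psi S m x| ≤ sfun 1 * ((m:ℝ) + 2) ^ 2 := by
  by_cases h : x ∈ Set.Icc (S - (m:ℝ) - 1) (S + m + 1)
  · rw [abs_of_nonneg (psi_nonneg S m x)]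
    apply mul_le_mul (chi_le _ _ _) _ (sq_nonneg _) (sfun_nonneg 1)
    rw [Set.mem_Icc] at h
    have : |x - S| ≤ (m:ℝ) + 2 := abs_le.2 ⟨by linarith [h.1], by linarith [h.2]⟩
    calc (x - S)^2 = |x - S|^2 := (sq_abs _).symm
    _ ≤ ((m:ℝ) + 2)^2 := by nlinarith [abs_nonneg (x - S)]
  · rw [psi_eq_zero S m h]
    simp [mul_nonneg (sfun_nonneg 1) (sq_nonneg ((m:ℝ)+2))]

lemma psi_pos (S : ℝ) (m : ℕ) {x : ℝ} (hne : x ≠ S) (h1 : S - m - 1 < x) (h2 : x ≤ S + m) :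
    0 < psi S m x :=
  mul_pos (chi_pos h1 h2) (by have := sub_ne_zero.2 hne; positivity)

attribute [irreducible] rho sfun chi psi

lemma key (f lam : ℝ × ℝ → ℝ) (c A S : ℝ) (hc : 0 < c)
    (hf0 : ∀ x, 0 ≤ f x) (hfInt : Integrable f) (hlam0 : ∀ x, 0 ≤ lam x)
    (hst : ∀ φ : ℝ → ℝ → ℝ, ContDiff ℝ 1 (fun y : ℝ × ℝ => φ y.1 y.2) →
      HasCompactSupport (fun y : ℝ × ℝ => φ y.1 y.2) →
      (∫ x : ℝ × ℝ, c * f x * deriv (φ x.1) x.2) + (φ S 0 * A) -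
        (∫ x : ℝ × ℝ, φ x.1 x.2 * lam x * f x) = 0) :
    ∀ᵐ x : ℝ × ℝ, f x = 0 := by
  -- integrability of the localized integrands
  have hbd : ∀ (m : ℕ) (t : ℝ),
      Integrable (fun x : ℝ × ℝ => (psi S m x.1 * rho (x.2 - t)) * f x) := by
    intro m t
    apply hfInt.bdd_mul (c := sfun 1 * ((m:ℝ) + 2) ^ 2)
    · exact (((psi_contDiff S m).continuous.comp continuous_fst).mul
        (rho_cont.comp (continuous_snd.sub continuous_const))).aestronglyMeasurable
    · refine Eventually.of_forall fun x => ?_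
      rw [Real.norm_eq_abs, abs_mul]
      calc |psi S m x.1| * |rho (x.2 - t)|
          ≤ (sfun 1 * ((m:ℝ) + 2) ^ 2) * 1 := by
            apply mul_le_mul (psi_bdd S m x.1) _ (abs_nonneg _) _
            · rw [abs_of_nonneg (rho_nonneg _)]; exact rho_le_one _
            · exact le_trans (abs_nonneg _) (psi_bdd S m x.1)
        _ = sfun 1 * ((m:ℝ) + 2) ^ 2 := mul_one _
  let J : ℕ → ℝ → ℝ := fun m t => ∫ x : ℝ × ℝ, (psi S m x.1 * rho (x.2 - t)) * f x
  have hJdef : ∀ m t, J m t = ∫ x : ℝ × ℝ, (psi S m x.1 * rho (x.2 - t)) * f x := fun _ _ => rfl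
  -- monotonicity
  have hmono : ∀ (m : ℕ) (a b : ℝ), a ≤ b → J m b ≤ J m a := by
    intro m a b hab
    have hmnn : (0:ℝ) ≤ (m:ℝ) := Nat.cast_nonneg m
    set φ : ℝ → ℝ → ℝ := fun x₁ x₂ => psi S m x₁ * chi a b x₂ with hφ
    have hφc : ContDiff ℝ 1 (fun y : ℝ × ℝ => φ y.1 y.2) :=
      ((psi_contDiff S m).comp contDiff_fst).mul ((chi_contDiff a b).comp contDiff_snd)
    have hφs : HasCompactSupport (fun y : ℝ × ℝ => φ y.1 y.2) := by
      apply HasCompactSupport.intro (isCompact_Icc.prod isCompact_Icc :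
        IsCompact ((Set.Icc (S - m - 1) (S + m + 1)) ×ˢ (Set.Icc a (b + 1))))
      intro x hx
      rw [Set.mem_prod, not_and_or] at hx
      rcases hx with hx | hx
      · show psi S m x.1 * chi a b x.2 = 0
        rw [psi_eq_zero S m hx]; ring
      · show psi S m x.1 * chi a b x.2 = 0
        rw [Set.mem_Icc, not_and_or] at hx
        rcases hx with hx | hx
        · rw [chi_eq_zero_of_le hab (by push_neg at hx; linarith)]; ring
        · rw [chi_eq_zero_of_ge hab (by push_neg at hx; linarith)]; ring
    have heq := hst φ hφc hφs
    have hder : ∀ x : ℝ × ℝ, c * f x * deriv (φ x.1) x.2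
        = c * ((psi S m x.1 * rho (x.2 - a)) * f x - (psi S m x.1 * rho (x.2 - b)) * f x) := by
      intro x
      have : deriv (φ x.1) x.2 = psi S m x.1 * (rho (x.2 - a) - rho (x.2 - b)) :=
        ((chi_hasDerivAt a b x.2).const_mul (psi S m x.1)).deriv
      rw [this]; ring
    have h1 : (∫ x : ℝ × ℝ, c * f x * deriv (φ x.1) x.2) = c * (J m a - J m b) := by
      simp only [hder]
      rw [integral_const_mul, integral_sub (hbd m a) (hbd m b)]
    have h2 : φ S 0 = 0 := by simp [hφ, psi_self]
    have h3 : 0 ≤ ∫ x : ℝ × ℝ, φ x.1 x.2 * lam x * f x := by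
      apply integral_nonneg
      intro x
      exact mul_nonneg (mul_nonneg (mul_nonneg (psi_nonneg S m x.1) (chi_nonneg hab x.2))
        (hlam0 x)) (hf0 x)
    rw [h1, h2, zero_mul, add_zero] at heq
    by_contra hcon
    push_neg at hcon
    have : c * (J m a - J m b) < 0 := mul_neg_of_pos_of_neg hc (by linarith)
    linarith
  -- tendsto as the bump escapes to ±∞
  have htend : ∀ (m : ℕ) (t : ℝ) (g : ℕ → ℝ),
      (∀ x₂ : ℝ, ∀ᶠ n in atTop, rho (x₂ - g n) = 0) →
      Tendsto (fun n : ℕ => J m (g n)) atTop (nhds 0) := by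
    intro m t g hg
    have := tendsto_integral_of_dominated_convergence
      (fun x : ℝ × ℝ => (sfun 1 * ((m:ℝ) + 2) ^ 2) * f x)
      (F := fun n (x : ℝ × ℝ) => (psi S m x.1 * rho (x.2 - g n)) * f x)
      (f := fun _ : ℝ × ℝ => (0:ℝ))
      (fun n => (hbd m (g n)).aestronglyMeasurable)
      (hfInt.const_mul _)
      (fun n => Eventually.of_forall fun x => by
        rw [Real.norm_eq_abs, abs_mul, abs_mul, abs_of_nonneg (hf0 x)]
        apply mul_le_mul_of_nonneg_right _ (hf0 x)
        calc |psi S m x.1| * |rho (x.2 - g n)|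
            ≤ (sfun 1 * ((m:ℝ) + 2) ^ 2) * 1 := by
              apply mul_le_mul (psi_bdd S m x.1) _ (abs_nonneg _)
                (le_trans (abs_nonneg _) (psi_bdd S m x.1))
              rw [abs_of_nonneg (rho_nonneg _)]; exact rho_le_one _
          _ = sfun 1 * ((m:ℝ) + 2) ^ 2 := mul_one _)
      (Eventually.of_forall fun x => by
        apply Tendsto.congr' _ tendsto_const_nhds
        filter_upwards [hg x.2] with n hn
        rw [hn]; ring)
    simpa using this
  have hJ0 : ∀ (m : ℕ) (t : ℝ), J m t = 0 := by
    intro m t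
    have hb : Tendsto (fun n : ℕ => J m (t + n)) atTop (nhds 0) := by
      apply htend m t
      intro x₂
      filter_upwards [eventually_ge_atTop ⌈x₂ - t⌉₊] with n hn
      apply rho_eq_zero
      left
      have h1 : x₂ - t ≤ (⌈x₂ - t⌉₊ : ℝ) := Nat.le_ceil _
      have h2 : ((⌈x₂ - t⌉₊ : ℕ) : ℝ) ≤ (n : ℝ) := Nat.cast_le.2 hn
      linarith
    have ha : Tendsto (fun n : ℕ => J m (t - n)) atTop (nhds 0) := by
      apply htend m t
      intro x₂
      filter_upwards [eventually_ge_atTop ⌈1 - (x₂ - t)⌉₊] with n hn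
      apply rho_eq_zero
      right
      have h1 : 1 - (x₂ - t) ≤ (⌈1 - (x₂ - t)⌉₊ : ℝ) := Nat.le_ceil _
      have h2 : ((⌈1 - (x₂ - t)⌉₊ : ℕ) : ℝ) ≤ (n : ℝ) := Nat.cast_le.2 hn
      linarith
    have hge : 0 ≤ J m t :=
      le_of_tendsto hb (Eventually.of_forall fun n =>
        hmono m t (t + n) (by linarith [Nat.cast_nonneg (α := ℝ) n]))
    have hle : J m t ≤ 0 :=
      ge_of_tendsto ha (Eventually.of_forall fun n =>
        hmono m (t - n) t (by linarith [Nat.cast_nonneg (α := ℝ) n]))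
    linarith
  -- a.e. vanishing on the localized sets
  have hae : ∀ (m : ℕ) (q : ℚ), ∀ᵐ x : ℝ × ℝ, (psi S m x.1 * rho (x.2 - q)) * f x = 0 := by
    intro m q
    have h0 := hJ0 m q
    rw [hJdef] at h0
    have := (integral_eq_zero_iff_of_nonneg (fun x =>
      mul_nonneg (mul_nonneg (psi_nonneg S m x.1) (rho_nonneg _)) (hf0 x)) (hbd m q)).mp h0
    filter_upwards [this] with x hx
    exact hx
  have hall : ∀ᵐ x : ℝ × ℝ, ∀ (m : ℕ) (q : ℚ), (psi S m x.1 * rho (x.2 - q)) * f x = 0 :=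
    ae_all_iff.2 fun m => ae_all_iff.2 fun q => hae m q
  have hS' : ∀ᵐ x : ℝ × ℝ, x.1 ≠ S := by
    have hnull : (volume : Measure (ℝ × ℝ)) (({S} : Set ℝ) ×ˢ (Set.univ : Set ℝ)) = 0 := by
      rw [Measure.volume_eq_prod, Measure.prod_prod]
      simp
    have := measure_eq_zero_iff_ae_notMem.1 hnull
    filter_upwards [this] with x hx
    intro h
    apply hx
    rw [Set.mem_prod]
    exact ⟨by simp [h], Set.mem_univ _⟩
  filter_upwards [hall, hS'] with x hx hxS
  obtain ⟨q, hq1, hq2⟩ := exists_rat_btwn (show x.2 - 1 < x.2 by linarith)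
  set m := ⌈|x.1 - S|⌉₊ with hm
  have habs : |x.1 - S| ≤ (m : ℝ) := Nat.le_ceil _
  have h1 : S - m - 1 < x.1 := by
    have := abs_le.1 habs
    linarith [this.1]
  have h2 : x.1 ≤ S + m := by
    have := abs_le.1 habs
    linarith [this.2]
  have hψ : 0 < psi S m x.1 := psi_pos S m hxS h1 h2
  have hρ : 0 < rho (x.2 - q) := rho_pos (by linarith) (by linarith)
  have hfin := hx m q
  rcases mul_eq_zero.1 hfin with h | h
  · exact absurd h (ne_of_gt (mul_pos hψ hρ))
  · exact h


/-- For nonnegative integrable steady states f⁺_∞, f⁻_∞ of the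
space-heterogeneous model (weak formulation against C¹ compactly supported test
functions), normalized with total mass one, the equilibrium excess demand
ED = ∫∫(f⁺_∞ − f⁻_∞) satisfies: if ED < 0 then f⁺_∞ = 0 (a.e.) and ED = −1; if ED > 0
then f⁻_∞ = 0 (a.e.) and ED = 1; hence ED ∈ {−1, 0, 1}. -/
theorem heterogeneous_equilibrium_excess_demand
    (fp fm : ℝ × ℝ → ℝ) (lam : ℝ × ℝ → ℝ) (H : ℝ → ℝ) (S : ℝ) (hS : 0 < S)
    (hH0 : ∀ x : ℝ, x ≤ 0 → H x = 0) (hHpos : ∀ x : ℝ, 0 < x → 0 < H x)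
    (hlam0 : ∀ x, 0 ≤ lam x) (hlamc : Continuous lam)
    (hfp0 : ∀ x, 0 ≤ fp x) (hfm0 : ∀ x, 0 ≤ fm x)
    (hfpInt : Integrable fp) (hfmInt : Integrable fm)
    (hmass : (∫ x, (fp x + fm x)) = 1)
    (ED : ℝ) (hED : ED = ∫ x, (fp x - fm x))
    (hsteady₁ : ∀ φ : ℝ → ℝ → ℝ,
      ContDiff ℝ 1 (fun y : ℝ × ℝ => φ y.1 y.2) →
      HasCompactSupport (fun y : ℝ × ℝ => φ y.1 y.2) →
      (∫ x : ℝ × ℝ, H (-ED) * fp x * deriv (φ x.1) x.2) +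
        (φ S 0 * ∫ x : ℝ × ℝ, lam x * fm x) -
        (∫ x : ℝ × ℝ, φ x.1 x.2 * lam x * fp x) = 0)
    (hsteady₂ : ∀ φ : ℝ → ℝ → ℝ,
      ContDiff ℝ 1 (fun y : ℝ × ℝ => φ y.1 y.2) →
      HasCompactSupport (fun y : ℝ × ℝ => φ y.1 y.2) →
      (∫ x : ℝ × ℝ, H ED * fm x * deriv (φ x.1) x.2) +
        (φ S 0 * ∫ x : ℝ × ℝ, lam x * fp x) -
        (∫ x : ℝ × ℝ, φ x.1 x.2 * lam x * fm x) = 0) :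
    (ED < 0 → (∀ᵐ x : ℝ × ℝ, fp x = 0) ∧ ED = -1) ∧
    (0 < ED → (∀ᵐ x : ℝ × ℝ, fm x = 0) ∧ ED = 1) ∧
    (ED = -1 ∨ ED = 0 ∨ ED = 1) := by
  have hsub : (∫ x : ℝ × ℝ, (fp x - fm x)) = (∫ x : ℝ × ℝ, fp x) - ∫ x : ℝ × ℝ, fm x :=
    integral_sub hfpInt hfmInt
  have hadd : (∫ x : ℝ × ℝ, (fp x + fm x)) = (∫ x : ℝ × ℝ, fp x) + ∫ x : ℝ × ℝ, fm x :=
    integral_add hfpInt hfmInt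
  have h₁ : ED < 0 → (∀ᵐ x : ℝ × ℝ, fp x = 0) ∧ ED = -1 := by
    intro hlt
    have hc : 0 < H (-ED) := hHpos _ (by linarith)
    have hae := key fp lam (H (-ED)) (∫ x : ℝ × ℝ, lam x * fm x) S hc hfp0 hfpInt hlam0 hsteady₁
    refine ⟨hae, ?_⟩
    have h0 : (∫ x : ℝ × ℝ, fp x) = 0 :=
      integral_eq_zero_of_ae (by filter_upwards [hae] with x hx; simpa using hx)
    rw [hsub, h0] at hED
    rw [hadd, h0] at hmass
    linarith
  have h₂ : 0 < ED → (∀ᵐ x : ℝ × ℝ, fm x = 0) ∧ ED = 1 := by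
    intro hlt
    have hc : 0 < H ED := hHpos _ hlt
    have hae := key fm lam (H ED) (∫ x : ℝ × ℝ, lam x * fp x) S hc hfm0 hfmInt hlam0 hsteady₂
    refine ⟨hae, ?_⟩
    have h0 : (∫ x : ℝ × ℝ, fm x) = 0 :=
      integral_eq_zero_of_ae (by filter_upwards [hae] with x hx; simpa using hx)
    rw [hsub, h0] at hED
    rw [hadd, h0] at hmass
    linarith
  refine ⟨h₁, h₂, ?_⟩
  rcases lt_trichotomy ED 0 with h | h | h
  · exact Or.inl (h₁ h).2
  · exact Or.inr (Or.inl h)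
  · exact Or.inr (Or.inr (h₂ h).2)
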